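/- arXiv:1906.02225 — 5 statements merged into one kernel-verified Lean document; each statement's English description precedes it below -/
import Mathlib

section
/- Let N ≥ 1 and let p be a real number with 1 < p ≤ 2. Then there exists a constant d₃ > 0 such that for all vectors ξ, η ∈ ℝ^N with (ξ, η) ≠ (0, 0) one has (|ξ|^{p-2}ξ − |η|^{p-2}η)·(ξ − η) ≥ d₃ |ξ − η|² / (|ξ| + |η|)^{2-p}. -/
open Real

private lemma aux_subadd {a b q : ℝ} (ha : 0 ≤ a) (hb : 0 ≤ b) (hq0 : 0 ≤ q) (hq1 : q ≤ 1) :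
    (a + b) ^ q ≤ a ^ q + b ^ q := by
  have h := NNReal.rpow_add_le_add_rpow a.toNNReal b.toNNReal hq0 hq1
  have h2 := NNReal.coe_le_coe.2 h
  simpa [NNReal.coe_rpow, Real.coe_toNNReal _ ha, Real.coe_toNNReal _ hb,
    Real.toNNReal_add ha hb, Real.coe_toNNReal _ (add_nonneg ha hb)] using h2

private lemma aux_mvt {q a b : ℝ} (hq0 : 0 < q) (hq1 : q ≤ 1) (hb : 0 ≤ b) (hba : b ≤ a)
    (ha : 0 < a) : q * a ^ (q - 1) * (a - b) ≤ a ^ q - b ^ q := by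
  have hs : (-1 : ℝ) ≤ b / a - 1 := by
    have : 0 ≤ b / a := div_nonneg hb ha.le
    linarith
  have hbern := rpow_one_add_le_one_add_mul_self hs hq0.le hq1
  rw [add_sub_cancel] at hbern
  have hdiv : (b / a) ^ q = b ^ q / a ^ q := Real.div_rpow hb ha.le q
  rw [hdiv] at hbern
  have haq : 0 < a ^ q := Real.rpow_pos_of_pos ha q
  have hmul := mul_le_mul_of_nonneg_right hbern haq.le
  rw [div_mul_cancel₀ _ haq.ne'] at hmul
  have hqa : a ^ (q - 1) * a = a ^ q := by
    rw [Real.rpow_sub_one ha.ne', div_mul_cancel₀ _ ha.ne']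
  have hqb : a ^ q * (b / a) = a ^ (q - 1) * b := by
    rw [Real.rpow_sub_one ha.ne']
    field_simp
  nlinarith [hmul, hqa, hqb]

private lemma rpow_mul_sq {p : ℝ} (hp : 0 < p) {a : ℝ} (ha : 0 ≤ a) :
    a ^ (p - 2) * a ^ 2 = a ^ p := by
  rcases eq_or_lt_of_le ha with h | h
  · simp [← h, Real.zero_rpow hp.ne']
  · rw [← Real.rpow_natCast a 2, ← Real.rpow_add h]
    norm_num

private lemma rpow_mul_self {p : ℝ} (hp : 1 < p) {a : ℝ} (ha : 0 ≤ a) :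
    a ^ (p - 2) * a = a ^ (p - 1) := by
  rcases eq_or_lt_of_le ha with h | h
  · simp [← h, Real.zero_rpow (by linarith : p - 1 ≠ 0)]
  · rw [mul_comm, ← Real.rpow_one_add' h.le (by intro hc; linarith)]
    ring_nf

private lemma rpow_self_mul {p : ℝ} (hp : 1 < p) {a : ℝ} (ha : 0 ≤ a) :
    a ^ (p - 1) * a = a ^ p := by
  rcases eq_or_lt_of_le ha with h | h
  · simp [← h, Real.zero_rpow (by linarith : p ≠ 0)]
  · rw [mul_comm, ← Real.rpow_one_add' h.le (by intro hc; linarith)]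
    ring_nf

/-- key scalar inequality -/
private lemma key {p : ℝ} (hp : 1 < p) (hp' : p ≤ 2) {a b t : ℝ} (ha : 0 ≤ a) (hb : 0 ≤ b)
    (hab : 0 < a + b) (ht : |t| ≤ a * b) :
    (p - 1) * (a ^ 2 + b ^ 2 - 2 * t) * (a + b) ^ (p - 2) ≤
      a ^ p + b ^ p - (a ^ (p - 2) + b ^ (p - 2)) * t := by
  have hq0 : (0 : ℝ) < p - 1 := by linarith
  have hq1 : p - 1 ≤ 1 := by linarith
  -- endpoint t = -a*b
  have E1 : (p - 1) * (a ^ 2 + b ^ 2 + 2 * (a * b)) * (a + b) ^ (p - 2) ≤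
      a ^ p + b ^ p + (a ^ (p - 2) + b ^ (p - 2)) * (a * b) := by
    have h1 : (a + b) ^ 2 * (a + b) ^ (p - 2) = (a + b) ^ p := by
      rw [mul_comm]; exact rpow_mul_sq (by linarith) hab.le
    have hsub : (a + b) ^ (p - 1) ≤ a ^ (p - 1) + b ^ (p - 1) :=
      aux_subadd ha hb hq0.le hq1
    have h2 : (p - 1) * (a + b) ^ (p - 1) ≤ a ^ (p - 1) + b ^ (p - 1) := by
      nlinarith [Real.rpow_pos_of_pos hab (p - 1)]
    have h3 : (p - 1) * (a + b) ^ p ≤ (a ^ (p - 1) + b ^ (p - 1)) * (a + b) := by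
      have := mul_le_mul_of_nonneg_right h2 hab.le
      calc (p - 1) * (a + b) ^ p = (p - 1) * (a + b) ^ (p - 1) * (a + b) := by
            rw [mul_assoc, rpow_self_mul hp hab.le]
        _ ≤ (a ^ (p - 1) + b ^ (p - 1)) * (a + b) := this
    have ea : a ^ (p - 2) * a = a ^ (p - 1) := rpow_mul_self hp ha
    have eb : b ^ (p - 2) * b = b ^ (p - 1) := rpow_mul_self hp hb
    have ea2 : a ^ (p - 1) * a = a ^ p := rpow_self_mul hp ha
    have eb2 : b ^ (p - 1) * b = b ^ p := rpow_self_mul hp hb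
    nlinarith [h3, h1]
  -- endpoint t = a*b
  have E2 : (p - 1) * (a ^ 2 + b ^ 2 - 2 * (a * b)) * (a + b) ^ (p - 2) ≤
      a ^ p + b ^ p - (a ^ (p - 2) + b ^ (p - 2)) * (a * b) := by
    have main : ∀ x y : ℝ, 0 ≤ y → y ≤ x → 0 < x + y →
        (p - 1) * (x - y) ^ 2 * (x + y) ^ (p - 2) ≤ (x ^ (p - 1) - y ^ (p - 1)) * (x - y) := by
      intro x y hy hyx hxy
      have hx : 0 < x := by nlinarith
      have hmvt := aux_mvt hq0 hq1 hy hyx hx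
      rw [show p - 1 - 1 = p - 2 by ring] at hmvt
      have hmono : (x + y) ^ (p - 2) ≤ x ^ (p - 2) :=
        Real.rpow_le_rpow_of_nonpos hx (by linarith) (by linarith)
      have hxy0 : 0 ≤ x - y := by linarith
      calc (p - 1) * (x - y) ^ 2 * (x + y) ^ (p - 2)
          = ((p - 1) * (x + y) ^ (p - 2) * (x - y)) * (x - y) := by ring
        _ ≤ ((p - 1) * x ^ (p - 2) * (x - y)) * (x - y) := by
            have h1 : (p - 1) * (x + y) ^ (p - 2) ≤ (p - 1) * x ^ (p - 2) :=
              mul_le_mul_of_nonneg_left hmono (by linarith)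
            have h2 := mul_le_mul_of_nonneg_right h1 hxy0
            nlinarith [mul_le_mul_of_nonneg_right h2 hxy0]
        _ ≤ (x ^ (p - 1) - y ^ (p - 1)) * (x - y) := mul_le_mul_of_nonneg_right hmvt hxy0
    have ea : a ^ (p - 2) * a = a ^ (p - 1) := rpow_mul_self hp ha
    have eb : b ^ (p - 2) * b = b ^ (p - 1) := rpow_mul_self hp hb
    have ea2 : a ^ (p - 1) * a = a ^ p := rpow_self_mul hp ha
    have eb2 : b ^ (p - 1) * b = b ^ p := rpow_self_mul hp hb
    rcases le_total b a with hba | hba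
    · have h := main a b hb hba hab
      nlinarith [h]
    · have h := main b a ha hba (by linarith)
      rw [show b + a = a + b by ring] at h
      nlinarith [h]
  -- affine interpolation in t
  have ht1 : -(a * b) ≤ t := neg_le_of_abs_le ht
  have ht2 : t ≤ a * b := le_of_abs_le ht
  set c : ℝ := 2 * (p - 1) * (a + b) ^ (p - 2) - (a ^ (p - 2) + b ^ (p - 2)) with hc
  rcases le_or_gt 0 c with hc0 | hc0
  · nlinarith [mul_le_mul_of_nonneg_left ht1 hc0]
  · nlinarith [mul_le_mul_of_nonpos_left ht2 hc0.le]

/-- Lemma 2.2(ii), first inequality: for `1 < p ≤ 2` there is `d₃ > 0` with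
`(|ξ|^{p-2}ξ − |η|^{p-2}η) · (ξ − η) ≥ d₃ |ξ − η|² / (|ξ| + |η|)^{2-p}`
for all `(ξ, η) ≠ (0, 0)` in `ℝ^N × ℝ^N`. -/
theorem stmt_2 (N : ℕ) (hN : 1 ≤ N) (p : ℝ) (hp : 1 < p) (hp' : p ≤ 2) :
    ∃ d₃ : ℝ, 0 < d₃ ∧ ∀ ξ η : EuclideanSpace ℝ (Fin N), (ξ, η) ≠ (0, 0) →
      (inner ℝ ((‖ξ‖ ^ (p - 2)) • ξ - (‖η‖ ^ (p - 2)) • η) (ξ - η) : ℝ) ≥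
        d₃ * ‖ξ - η‖ ^ 2 / (‖ξ‖ + ‖η‖) ^ (2 - p) := by
  refine ⟨p - 1, by linarith, fun ξ η hne => ?_⟩
  set a := ‖ξ‖ with hadef
  set b := ‖η‖ with hbdef
  set t : ℝ := inner ℝ ξ η with htdef
  have ha : 0 ≤ a := norm_nonneg ξ
  have hb : 0 ≤ b := norm_nonneg η
  have hab : 0 < a + b := by
    rcases (add_nonneg ha hb).lt_or_eq with h | h
    · exact h
    · exfalso
      apply hne
      have hξ : ξ = 0 := norm_eq_zero.mp (by linarith)
      have hη : η = 0 := norm_eq_zero.mp (by linarith)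
      simp [hξ, hη]
  have ht : |t| ≤ a * b := abs_real_inner_le_norm ξ η
  have hLHS : (inner ℝ ((a ^ (p - 2)) • ξ - (b ^ (p - 2)) • η) (ξ - η) : ℝ) =
      a ^ p + b ^ p - (a ^ (p - 2) + b ^ (p - 2)) * t := by
    rw [inner_sub_left, inner_sub_right, inner_sub_right, real_inner_smul_left,
      real_inner_smul_left, real_inner_smul_left, real_inner_smul_left,
      real_inner_self_eq_norm_sq, real_inner_self_eq_norm_sq, real_inner_comm ξ η]
    rw [← hadef, ← hbdef, ← htdef, ← rpow_mul_sq (by linarith : (0:ℝ) < p) ha,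
      ← rpow_mul_sq (by linarith : (0:ℝ) < p) hb]
    ring
  have hnorm : ‖ξ - η‖ ^ 2 = a ^ 2 + b ^ 2 - 2 * t := by
    rw [norm_sub_sq_real, ← hadef, ← hbdef, ← htdef]; ring
  have hdivrw : (p - 1) * ‖ξ - η‖ ^ 2 / (a + b) ^ (2 - p) =
      (p - 1) * (a ^ 2 + b ^ 2 - 2 * t) * (a + b) ^ (p - 2) := by
    rw [hnorm, div_eq_mul_inv, ← Real.rpow_neg hab.le, show -(2 - p) = p - 2 by ring]
  rw [hLHS, hdivrw]
  exact key hp hp' ha hb hab ht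
end

section
/- Let N ≥ 1 and let p be a real number with 1 < p ≤ 2. Then there exists a constant d₄ > 0 such that for all vectors ξ, η ∈ ℝ^N one has | |ξ|^{p-2}ξ − |η|^{p-2}η | ≤ d₄ |ξ − η|^{p-1}. -/
open Real

section Aux

variable {E : Type*} [NormedAddCommGroup E] [NormedSpace ℝ E]

private lemma norm_phi (p : ℝ) (hp : 1 < p) (ξ : E) :
    ‖(‖ξ‖ ^ (p - 2)) • ξ‖ = ‖ξ‖ ^ (p - 1) := by
  by_cases h : ξ = 0
  · simp [h, Real.zero_rpow (show p - 1 ≠ 0 by linarith)]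
  · have hpos : (0:ℝ) < ‖ξ‖ := norm_pos_iff.mpr h
    rw [norm_smul, Real.norm_eq_abs, abs_of_nonneg (Real.rpow_nonneg (norm_nonneg _) _),
      show p - 1 = (p - 2) + 1 by ring, Real.rpow_add_one hpos.ne']

/-- Bernoulli-type: for `0 < s ≤ t`, `0 ≤ r ≤ 1`, `t^r ≤ s^r + r * s^(r-1) * (t-s)`. -/
private lemma bernoulli_aux {s t r : ℝ} (hs : 0 < s) (hst : s ≤ t) (hr0 : 0 ≤ r)
    (hr1 : r ≤ 1) : t ^ r ≤ s ^ r + r * s ^ (r - 1) * (t - s) := by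
  have hx : (0:ℝ) ≤ (t - s) / s := div_nonneg (by linarith) hs.le
  have hb := rpow_one_add_le_one_add_mul_self (s := (t - s)/s) (by linarith) hr0 hr1
  have ht : t = s * (1 + (t - s)/s) := by field_simp; ring
  have hsr : (0:ℝ) < s ^ r := Real.rpow_pos_of_pos hs _
  calc t ^ r = (s * (1 + (t-s)/s)) ^ r := by rw [← ht]
    _ = s ^ r * (1 + (t-s)/s) ^ r := Real.mul_rpow hs.le (by linarith)
    _ ≤ s ^ r * (1 + r * ((t-s)/s)) := mul_le_mul_of_nonneg_left hb hsr.le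
    _ = s ^ r + r * (s ^ r / s) * (t - s) := by field_simp
    _ = s ^ r + r * s ^ (r - 1) * (t - s) := by rw [← Real.rpow_sub_one hs.ne']

/-- key bound on the scalar difference term. -/
private lemma scalar_term (p : ℝ) (hp : 1 < p) (hp' : p ≤ 2) {s t D : ℝ}
    (hD : 0 < D) (hDs : D < s) (hst : s ≤ t) (htsD : t - s ≤ D) :
    s * (s ^ (p - 2) - t ^ (p - 2)) ≤ (2 - p) * D ^ (p - 1) := by
  set a := 2 - p with ha
  have ha0 : 0 ≤ a := by simp only [ha]; linarith
  have ha1 : a ≤ 1 := by simp only [ha]; linarith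
  have hs : 0 < s := hD.trans hDs
  have ht : 0 < t := hs.trans_le hst
  set A := s ^ a with hA
  set B := t ^ a with hB
  set C := s ^ (a - 1) with hC
  have hApos : 0 < A := Real.rpow_pos_of_pos hs _
  have hBpos : 0 < B := Real.rpow_pos_of_pos ht _
  have hCA : C * s = A := by rw [hC, hA, ← Real.rpow_add_one hs.ne']; ring_nf
  have hCpos : 0 < C := Real.rpow_pos_of_pos hs _
  have hbern : B ≤ A + a * C * (t - s) := bernoulli_aux hs hst ha0 ha1
  have k0 := mul_le_mul_of_nonneg_left hbern hs.le
  have k1 : s * (a * C * (t - s)) = a * A * (t - s) := by rw [← hCA]; ring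
  have k2 : a * A * (t - s) ≤ a * A * D :=
    mul_le_mul_of_nonneg_left htsD (by positivity)
  have key : s * (B - A) ≤ a * A * D := by nlinarith [k0, k1, k2]
  set En := D ^ a with hE
  have hEpos : 0 < En := Real.rpow_pos_of_pos hD _
  have hEB : En ≤ B := Real.rpow_le_rpow hD.le (by linarith) ha0
  have hsp2 : s ^ (p - 2) = A⁻¹ := by
    rw [hA, ← Real.rpow_neg hs.le, show -a = p - 2 by rw [ha]; ring]
  have htp2 : t ^ (p - 2) = B⁻¹ := by
    rw [hB, ← Real.rpow_neg ht.le, show -a = p - 2 by rw [ha]; ring]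
  have hDp1 : D ^ (p - 1) = D / En := by
    rw [show p - 1 = 1 - a by rw [ha]; ring, Real.rpow_sub hD, Real.rpow_one, ← hE]
  rw [hsp2, htp2, hDp1]
  have hinv : A⁻¹ - B⁻¹ = (B - A) / (A * B) := by field_simp
  rw [hinv]
  rw [show s * ((B - A) / (A * B)) = (s * (B - A)) / (A * B) by ring,
      show (2 - p) * (D / En) = ((2 - p) * D) / En by ring,
      div_le_div_iff₀ (mul_pos hApos hBpos) hEpos]
  have h1 : s * (B - A) * En ≤ a * A * D * En := mul_le_mul_of_nonneg_right key hEpos.le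
  have h2 : a * A * D * En ≤ a * A * D * B :=
    mul_le_mul_of_nonneg_left hEB (by positivity)
  have hgoal : s * (B - A) * En ≤ a * D * (A * B) := by nlinarith [h1, h2]
  rw [ha] at hgoal
  linarith [hgoal]

private lemma main_aux (p : ℝ) (hp : 1 < p) (hp' : p ≤ 2) (ξ η : E)
    (hle : ‖η‖ ≤ ‖ξ‖) :
    ‖(‖ξ‖ ^ (p - 2)) • ξ - (‖η‖ ^ (p - 2)) • η‖ ≤ 4 * ‖ξ - η‖ ^ (p - 1) := by
  by_cases heq : ξ = η
  · subst heq; simp only [sub_self, norm_zero]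
    positivity
  have hD : (0:ℝ) < ‖ξ - η‖ := by
    rw [norm_pos_iff]; exact sub_ne_zero_of_ne heq
  set D := ‖ξ - η‖ with hDdef
  set t := ‖ξ‖ with htdef
  set s := ‖η‖ with hsdef
  have hp1 : (0:ℝ) < p - 1 := by linarith
  rcases le_or_gt t (2 * D) with hcase | hcase
  · -- big-difference case
    calc ‖(t ^ (p - 2)) • ξ - (s ^ (p - 2)) • η‖
        ≤ ‖(t ^ (p - 2)) • ξ‖ + ‖(s ^ (p - 2)) • η‖ := norm_sub_le _ _
      _ = t ^ (p-1) + s ^ (p-1) := by rw [norm_phi p hp, norm_phi p hp]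
      _ ≤ (2*D) ^ (p-1) + (2*D) ^ (p-1) :=
          add_le_add (Real.rpow_le_rpow (norm_nonneg ξ) hcase (by linarith))
            (Real.rpow_le_rpow (norm_nonneg η) (hle.trans hcase) (by linarith))
      _ = 2^(p-1) * D^(p-1) + 2^(p-1) * D^(p-1) := by
          rw [Real.mul_rpow (by norm_num) hD.le]
      _ ≤ 2 * D^(p-1) + 2 * D^(p-1) := by
          have h2 : (2:ℝ)^(p-1) ≤ 2 := by
            calc (2:ℝ)^(p-1) ≤ 2^(1:ℝ) :=
                  Real.rpow_le_rpow_of_exponent_le one_le_two (by linarith)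
              _ = 2 := Real.rpow_one 2
          gcongr <;> positivity
      _ = 4 * D ^ (p-1) := by ring
  · -- small-difference case
    have habs : |t - s| ≤ D := abs_norm_sub_norm_le ξ η
    have hts : t - s ≤ D := (le_abs_self _).trans habs
    have hsD : D < s := by
      have := abs_le.mp habs
      linarith
    have hs : 0 < s := hD.trans hsD
    have hdec : (t ^ (p - 2)) • ξ - (s ^ (p - 2)) • η
        = (t ^ (p - 2)) • (ξ - η) + (t ^ (p - 2) - s ^ (p - 2)) • η := by
      rw [smul_sub, sub_smul]; abel
    have hmono : t ^ (p-2) ≤ s ^ (p-2) :=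
      Real.rpow_le_rpow_of_nonpos hs hle (by linarith)
    have habs2 : |t ^ (p-2) - s ^ (p-2)| = s ^ (p-2) - t ^ (p-2) := by
      rw [abs_sub_comm, abs_of_nonneg (by linarith)]
    have hterm1 : t ^ (p-2) * D ≤ D ^ (p-1) := by
      have h1 : t ^ (p-2) ≤ (2*D) ^ (p-2) :=
        Real.rpow_le_rpow_of_nonpos (by positivity) hcase.le (by linarith)
      have h2 : ((2:ℝ)*D) ^ (p-2) = 2^(p-2) * D^(p-2) :=
        Real.mul_rpow (by norm_num) hD.le
      have h3 : (2:ℝ)^(p-2) ≤ 1 :=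
        Real.rpow_le_one_of_one_le_of_nonpos one_le_two (by linarith)
      have h4 : D^(p-2) * D = D^(p-1) := by
        rw [show p - 1 = (p-2) + 1 by ring, Real.rpow_add_one hD.ne']
      have hDp2 : (0:ℝ) ≤ D^(p-2) := Real.rpow_nonneg hD.le _
      calc t ^ (p-2) * D ≤ 2^(p-2) * D^(p-2) * D := by
            rw [← h2]; exact mul_le_mul_of_nonneg_right h1 hD.le
        _ ≤ 1 * D^(p-2) * D := by
            have := mul_le_mul_of_nonneg_right h3 hDp2
            nlinarith
        _ = D^(p-1) := by rw [one_mul, h4]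
    have hterm2 : (s ^ (p-2) - t ^ (p-2)) * s ≤ (2-p) * D^(p-1) := by
      rw [mul_comm]; exact scalar_term p hp hp' hD hsD hle hts
    calc ‖(t ^ (p - 2)) • ξ - (s ^ (p - 2)) • η‖
        ≤ ‖(t ^ (p - 2)) • (ξ - η)‖ + ‖(t ^ (p - 2) - s ^ (p - 2)) • η‖ := by
          rw [hdec]; exact norm_add_le _ _
      _ = t ^ (p-2) * D + (s ^ (p-2) - t ^ (p-2)) * s := by
          rw [norm_smul, norm_smul, Real.norm_eq_abs, Real.norm_eq_abs,
            abs_of_nonneg (Real.rpow_nonneg (norm_nonneg _) _), habs2]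
      _ ≤ D^(p-1) + (2-p) * D^(p-1) := add_le_add hterm1 hterm2
      _ ≤ 4 * D^(p-1) := by nlinarith [Real.rpow_nonneg hD.le (p-1)]

end Aux

/-- Lemma 2.2(ii), second inequality: for `1 < p ≤ 2` there is `d₄ > 0` with
`| |ξ|^{p-2}ξ − |η|^{p-2}η | ≤ d₄ |ξ − η|^{p-1}` for all `ξ, η ∈ ℝ^N`. -/
theorem stmt_3 (N : ℕ) (hN : 1 ≤ N) (p : ℝ) (hp : 1 < p) (hp' : p ≤ 2) :
    ∃ d₄ : ℝ, 0 < d₄ ∧ ∀ ξ η : EuclideanSpace ℝ (Fin N),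
      ‖(‖ξ‖ ^ (p - 2)) • ξ - (‖η‖ ^ (p - 2)) • η‖ ≤ d₄ * ‖ξ - η‖ ^ (p - 1) := by
  refine ⟨4, by norm_num, fun ξ η => ?_⟩
  rcases le_total ‖η‖ ‖ξ‖ with h | h
  · exact main_aux p hp hp' ξ η h
  · rw [norm_sub_rev, show ‖ξ - η‖ = ‖η - ξ‖ from norm_sub_rev ξ η]
    exact main_aux p hp hp' η ξ h
end

section
/- Let p > 1 be a real number and let f : ℝ → ℝ be continuous with f(0) = 0 such that the map t ↦ f(t)/t^{p-1} is strictly increasing on (0, ∞). Define H(t) = f(t) t − p ∫₀^t f(s) ds. Then H is strictly increasing on (0, ∞) and H(t) ≥ 0 for all t ≥ 0. -/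
open intervalIntegral

/-- For `p > 1` and `f : ℝ → ℝ` continuous with `f 0 = 0` such that
`t ↦ f(t)/t^{p-1}` is strictly increasing on `(0, ∞)`, the function
`H(t) = f(t) t − p ∫₀^t f(s) ds` is strictly increasing on `(0, ∞)` and
nonnegative on `[0, ∞)`. -/
theorem stmt_11 (p : ℝ) (hp : 1 < p) (f : ℝ → ℝ) (hf : Continuous f)
    (hf0 : f 0 = 0)
    (hmono : StrictMonoOn (fun t => f t / t ^ (p - 1)) (Set.Ioi (0 : ℝ))) :
    StrictMonoOn (fun t => f t * t - p * ∫ s in (0 : ℝ)..t, f s) (Set.Ioi (0 : ℝ)) ∧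
      ∀ t ≥ (0 : ℝ), 0 ≤ f t * t - p * ∫ s in (0 : ℝ)..t, f s := by
  have hp0 : (0:ℝ) < p := by linarith
  have hp1 : (0:ℝ) < p - 1 := by linarith
  -- g b * b ^ p = f b * b for b > 0
  have hgb : ∀ b : ℝ, 0 < b → (f b / b ^ (p-1)) * b ^ p = f b * b := by
    intro b hb
    have hbne : b ^ (p-1) ≠ 0 := (Real.rpow_pos_of_pos hb _).ne'
    have hbp : b ^ p = b ^ (p-1) * b := by
      rw [← Real.rpow_add_one hb.ne' (p-1)]
      norm_num
    rw [hbp]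
    field_simp
  -- key integral estimate
  have key : ∀ a b : ℝ, 0 ≤ a → a ≤ b → 0 < b →
      p * ∫ s in a..b, f s ≤ (f b / b ^ (p-1)) * (b ^ p - a ^ p) := by
    intro a b ha hab hb
    set c := f b / b ^ (p-1) with hc
    have hle : ∀ s ∈ Set.Icc a b, f s ≤ c * s ^ (p-1) := by
      intro s hs
      rcases eq_or_lt_of_le (ha.trans hs.1) with h0 | h0
      · rw [← h0, hf0, Real.zero_rpow (by linarith : p - 1 ≠ 0), mul_zero]
      · have hspos : (0:ℝ) < s ^ (p-1) := Real.rpow_pos_of_pos h0 _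
        have hgs : f s / s ^ (p-1) ≤ c :=
          hmono.monotoneOn (Set.mem_Ioi.2 h0) (Set.mem_Ioi.2 hb) hs.2
        calc f s = (f s / s ^ (p-1)) * s ^ (p-1) := by field_simp
          _ ≤ c * s ^ (p-1) := mul_le_mul_of_nonneg_right hgs hspos.le
    have hint1 : IntervalIntegrable f MeasureTheory.volume a b := hf.intervalIntegrable a b
    have hint2 : IntervalIntegrable (fun s => c * s ^ (p-1)) MeasureTheory.volume a b :=
      (intervalIntegrable_rpow (Or.inl hp1.le)).const_mul c
    have hmono' : (∫ s in a..b, f s) ≤ ∫ s in a..b, c * s ^ (p-1) :=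
      intervalIntegral.integral_mono_on hab hint1 hint2 hle
    have hval : (∫ s in a..b, c * s ^ (p-1)) = c * ((b ^ p - a ^ p) / p) := by
      rw [intervalIntegral.integral_const_mul, integral_rpow (Or.inl (by linarith))]
      have : p - 1 + 1 = p := by ring
      rw [this]
    rw [hval] at hmono'
    calc p * ∫ s in a..b, f s ≤ p * (c * ((b ^ p - a ^ p) / p)) :=
          mul_le_mul_of_nonneg_left hmono' hp0.le
      _ = c * (b ^ p - a ^ p) := by field_simp
  constructor
  · intro a ha b hb hab
    simp only
    have ha' : (0:ℝ) < a := ha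
    have hb' : (0:ℝ) < b := hb
    have hsplit : (∫ s in (0:ℝ)..b, f s) = (∫ s in (0:ℝ)..a, f s) + ∫ s in a..b, f s :=
      (intervalIntegral.integral_add_adjacent_intervals (hf.intervalIntegrable 0 a)
        (hf.intervalIntegrable a b)).symm
    have h1 := key a b ha'.le hab.le hb'
    have h2a := hgb a ha'
    have h2b := hgb b hb'
    have h3 : f a / a ^ (p-1) < f b / b ^ (p-1) := hmono ha hb hab
    have hap : (0:ℝ) < a ^ p := Real.rpow_pos_of_pos ha' p
    have h4 : (f a / a ^ (p-1)) * a ^ p < (f b / b ^ (p-1)) * a ^ p :=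
      mul_lt_mul_of_pos_right h3 hap
    rw [hsplit]
    nlinarith [h1, h2a, h2b, h4]
  · intro t ht
    rcases eq_or_lt_of_le ht with h0 | h0
    · simp [← h0, hf0]
    · have h1 := key 0 t le_rfl h0.le h0
      have h2 := hgb t h0
      rw [Real.zero_rpow hp0.ne'] at h1
      linarith
end

section
/- Let p > 1 be a real number. Then for all real numbers a, b, c, d one has (|a − b|^{p-2}(a − b) − |c − d|^{p-2}(c − d)) · ((a − c)⁺ − (b − d)⁺) ≥ 0, where x⁺ = max{x, 0} and |t|^{p-2} t is interpreted as 0 when t = 0. Moreover, the inequality is strict whenever (a − c)⁺ ≠ (b − d)⁺. -/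
private lemma g_pos_eq (p : ℝ) {t : ℝ} (ht : 0 < t) :
    |t| ^ (p - 2) * t = t ^ (p - 1) := by
  rw [abs_of_pos ht, ← Real.rpow_add_one ht.ne']
  congr 1
  ring

private lemma g_mono (p : ℝ) (hp : 1 < p) {s t : ℝ} (h : s < t) :
    |s| ^ (p - 2) * s < |t| ^ (p - 2) * t := by
  have hp1 : 0 < p - 1 := by linarith
  have key : ∀ u v : ℝ, 0 ≤ u → u < v → |u| ^ (p - 2) * u < |v| ^ (p - 2) * v := by
    intro u v hu huv
    have hv : 0 < v := lt_of_le_of_lt hu huv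
    rw [g_pos_eq p hv]
    rcases eq_or_lt_of_le hu with h0 | h0
    · rw [← h0, mul_zero]
      exact Real.rpow_pos_of_pos hv _
    · rw [g_pos_eq p h0]
      exact Real.rpow_lt_rpow hu huv hp1
  rcases le_or_gt 0 s with hs | hs
  · exact key s t hs h
  · rcases le_or_gt t 0 with ht | ht
    · have := key (-t) (-s) (by linarith) (by linarith)
      rw [abs_neg, abs_neg] at this
      nlinarith [this]
    · have h1 : |s| ^ (p - 2) * s < 0 :=
        mul_neg_of_pos_of_neg (Real.rpow_pos_of_pos (abs_pos.mpr hs.ne) _) hs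
      have h2 : 0 < |t| ^ (p - 2) * t := by
        have : (0:ℝ) = |(0:ℝ)| ^ (p-2) * 0 := by simp
        rw [this]
        exact key 0 t le_rfl ht
      linarith

/-- The pointwise monotonicity inequality for the kernel of the fractional
`p`-Laplacian (key step in the weak comparison principle, Lemma 2.3):
`(|a − b|^{p-2}(a − b) − |c − d|^{p-2}(c − d)) ((a − c)⁺ − (b − d)⁺) ≥ 0`,
with strict inequality whenever `(a − c)⁺ ≠ (b − d)⁺`.  Here `x⁺ = max {x, 0}`
and `|t|^{p-2} t = 0` when `t = 0`. -/
theorem stmt_16 (p : ℝ) (hp : 1 < p) (a b c d : ℝ) :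
    0 ≤ (|a - b| ^ (p - 2) * (a - b) - |c - d| ^ (p - 2) * (c - d)) *
        (max (a - c) 0 - max (b - d) 0) ∧
      (max (a - c) 0 ≠ max (b - d) 0 →
        0 < (|a - b| ^ (p - 2) * (a - b) - |c - d| ^ (p - 2) * (c - d)) *
          (max (a - c) 0 - max (b - d) 0)) := by
  set A := max (a - c) 0 with hA
  set B := max (b - d) 0 with hB
  have key : A ≠ B → 0 < (|a - b| ^ (p - 2) * (a - b) - |c - d| ^ (p - 2) * (c - d)) * (A - B) := by
    intro hne
    rcases lt_or_gt_of_ne hne with h | h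
    · -- A < B, so b - d > 0 and a - c ≤ A < B = b - d, hence a - b < c - d
      have hbd0 : 0 < b - d := by
        by_contra hb
        push_neg at hb
        have h1 : B = 0 := max_eq_right hb
        have h2 : (0:ℝ) ≤ A := le_max_right _ _
        linarith
      have hBv : B = b - d := max_eq_left hbd0.le
      have hac : a - c ≤ A := le_max_left _ _
      have hst : a - b < c - d := by linarith
      have := g_mono p hp hst
      exact mul_pos_of_neg_of_neg (by linarith) (by linarith)
    · -- B < A
      have hac0 : 0 < a - c := by
        by_contra hb
        push_neg at hb
        have h1 : A = 0 := max_eq_right hb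
        have h2 : (0:ℝ) ≤ B := le_max_right _ _
        linarith
      have hAv : A = a - c := max_eq_left hac0.le
      have hbd : b - d ≤ B := le_max_left _ _
      have hst : c - d < a - b := by linarith
      have := g_mono p hp hst
      exact mul_pos (by linarith) (by linarith)
  refine ⟨?_, key⟩
  rcases eq_or_ne A B with h | h
  · simp [h]
  · exact (key h).le
end

section
/- Let N ≥ 1, let Ω ⊂ ℝ^N be a bounded measurable set, let s ∈ (0, 1), p > 1, γ ∈ (0, 1) and λ > 0. Let u, v : ℝ^N → ℝ be measurable functions with u = 0 and v = 0 almost everywhere on ℝ^N \ Ω and u > 0, v > 0 almost everywhere on Ω, and set w = (u − v)⁺. Assume that the function (x, y) ↦ (|u(x) − u(y)|^{p-2}(u(x) − u(y)) − |v(x) − v(y)|^{p-2}(v(x) − v(y))) (w(x) − w(y)) / |x − y|^{N+sp} is integrable on ℝ^N × ℝ^N, that w/u^γ and w/v^γ are integrable on Ω, and that the weak inequality tested against w holds: ∫∫_{ℝ^N × ℝ^N} (|v(x) − v(y)|^{p-2}(v(x) − v(y)) − |u(x) − u(y)|^{p-2}(u(x) − u(y))) (w(x) − w(y)) / |x − y|^{N+sp}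 dx dy ≥ λ ∫_Ω w (1/v^γ − 1/u^γ) dx. Then u ≤ v almost everywhere in ℝ^N. -/
open MeasureTheory

lemma phi_mono' {p : ℝ} (hp : 1 < p) : Monotone (fun t : ℝ => |t| ^ (p - 2) * t) := by
  have hr : (0:ℝ) < p - 1 := by linarith
  have key : ∀ t : ℝ, 0 < t → |t| ^ (p - 2) * t = t ^ (p - 1) := by
    intro t ht
    rw [abs_of_pos ht]
    have : t ^ (p - 1) = t ^ ((p - 2) + 1) := by ring_nf
    rw [this, Real.rpow_add ht, Real.rpow_one]
  intro a b hab
  rcases le_or_gt 0 a with ha | ha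
  · have hb : 0 ≤ b := ha.trans hab
    rcases eq_or_lt_of_le ha with h0 | ha'
    · rcases eq_or_lt_of_le hb with hb0 | hb'
      · simp [← h0, ← hb0]
      · simp only [← h0, abs_zero, mul_zero]
        exact le_of_lt (by
          rw [key b hb']
          exact Real.rpow_pos_of_pos hb' _)
    · simp only
      rw [key a ha', key b (ha'.trans_le hab)]
      exact Real.rpow_le_rpow ha hab hr.le
  · rcases le_or_gt 0 b with hb | hb
    · have h1 : |a| ^ (p - 2) * a ≤ 0 :=
        mul_nonpos_of_nonneg_of_nonpos (Real.rpow_nonneg (abs_nonneg a) _) ha.le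
      have h2 : 0 ≤ |b| ^ (p - 2) * b :=
        mul_nonneg (Real.rpow_nonneg (abs_nonneg b) _) hb
      exact h1.trans h2
    · have hab' : a < 0 := hab.trans_lt hb
      have k1 : |a| ^ (p - 2) * a = -((-a) ^ (p - 1)) := by
        have h := key (-a) (by linarith)
        rw [abs_neg, abs_of_neg hab'] at h
        rw [abs_of_neg hab']
        linarith
      have k2 : |b| ^ (p - 2) * b = -((-b) ^ (p - 1)) := by
        have h := key (-b) (by linarith)
        rw [abs_neg, abs_of_neg hb] at h
        rw [abs_of_neg hb]
        linarith
      simp only [k1, k2]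
      have := Real.rpow_le_rpow (by linarith : (0:ℝ) ≤ -b) (by linarith : -b ≤ -a) hr.le
      linarith

/-- Lemma 2.3 (weak comparison principle) for the singular fractional
`p`-Laplacian: if `u, v` vanish a.e. outside the bounded set `Ω`, are a.e.
positive on `Ω`, the kernel difference tested against `w = (u − v)⁺` is
integrable, `w/u^γ` and `w/v^γ` are integrable on `Ω`, and the weak inequality
`(−Δ_p)^s v − λ/v^γ ≥ (−Δ_p)^s u − λ/u^γ` tested against `w` holds, then
`u ≤ v` a.e. in `ℝ^N`. -/
theorem stmt_17 (N : ℕ) (hN : 1 ≤ N) (Ω : Set (EuclideanSpace ℝ (Fin N)))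
    (hΩm : MeasurableSet Ω) (hΩb : Bornology.IsBounded Ω)
    (s p γ lam : ℝ) (hs : 0 < s) (hs1 : s < 1) (hp : 1 < p)
    (hγ : 0 < γ) (hγ1 : γ < 1) (hlam : 0 < lam)
    (u v : EuclideanSpace ℝ (Fin N) → ℝ) (hu : Measurable u) (hv : Measurable v)
    (hu0 : ∀ᵐ x ∂volume, x ∉ Ω → u x = 0) (hv0 : ∀ᵐ x ∂volume, x ∉ Ω → v x = 0)
    (hupos : ∀ᵐ x ∂volume, x ∈ Ω → 0 < u x) (hvpos : ∀ᵐ x ∂volume, x ∈ Ω → 0 < v x)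
    (w : EuclideanSpace ℝ (Fin N) → ℝ) (hw : w = fun x => max (u x - v x) 0)
    (hker : Integrable (fun z : EuclideanSpace ℝ (Fin N) × EuclideanSpace ℝ (Fin N) =>
      (|u z.1 - u z.2| ^ (p - 2) * (u z.1 - u z.2) -
          |v z.1 - v z.2| ^ (p - 2) * (v z.1 - v z.2)) * (w z.1 - w z.2) /
        ‖z.1 - z.2‖ ^ ((N : ℝ) + s * p)) volume)
    (hwu : IntegrableOn (fun x => w x / u x ^ γ) Ω volume)
    (hwv : IntegrableOn (fun x => w x / v x ^ γ) Ω volume)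
    (hineq : lam * ∫ x in Ω, w x * (1 / v x ^ γ - 1 / u x ^ γ) ∂volume ≤
      ∫ z : EuclideanSpace ℝ (Fin N) × EuclideanSpace ℝ (Fin N),
        (|v z.1 - v z.2| ^ (p - 2) * (v z.1 - v z.2) -
            |u z.1 - u z.2| ^ (p - 2) * (u z.1 - u z.2)) * (w z.1 - w z.2) /
          ‖z.1 - z.2‖ ^ ((N : ℝ) + s * p) ∂volume) :
    ∀ᵐ x ∂volume, u x ≤ v x := by
  -- Step 1: the RHS integral is ≤ 0 pointwise.
  have hRHS : (∫ z : EuclideanSpace ℝ (Fin N) × EuclideanSpace ℝ (Fin N),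
        (|v z.1 - v z.2| ^ (p - 2) * (v z.1 - v z.2) -
            |u z.1 - u z.2| ^ (p - 2) * (u z.1 - u z.2)) * (w z.1 - w z.2) /
          ‖z.1 - z.2‖ ^ ((N : ℝ) + s * p) ∂volume) ≤ 0 := by
    apply integral_nonpos
    intro z
    simp only
    apply div_nonpos_of_nonpos_of_nonneg _ (Real.rpow_nonneg (norm_nonneg _) _)
    have hm := phi_mono' hp
    rcases le_total (u z.1 - v z.1) (u z.2 - v z.2) with h | h
    · have h1 : u z.1 - u z.2 ≤ v z.1 - v z.2 := by linarith
      have h2 : w z.1 ≤ w z.2 := by simp only [hw]; exact max_le_max h le_rfl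
      have h3 : |u z.1 - u z.2| ^ (p - 2) * (u z.1 - u z.2) ≤
          |v z.1 - v z.2| ^ (p - 2) * (v z.1 - v z.2) := hm h1
      exact mul_nonpos_of_nonneg_of_nonpos (by linarith) (by linarith)
    · have h1 : v z.1 - v z.2 ≤ u z.1 - u z.2 := by linarith
      have h2 : w z.2 ≤ w z.1 := by simp only [hw]; exact max_le_max h le_rfl
      have h3 : |v z.1 - v z.2| ^ (p - 2) * (v z.1 - v z.2) ≤
          |u z.1 - u z.2| ^ (p - 2) * (u z.1 - u z.2) := hm h1
      exact mul_nonpos_of_nonpos_of_nonneg (by linarith) (by linarith)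
  -- Step 2: the LHS integrand is a.e. nonneg on Ω.
  have hg_nonneg : ∀ᵐ x ∂volume.restrict Ω, 0 ≤ w x * (1 / v x ^ γ - 1 / u x ^ γ) := by
    rw [ae_restrict_iff' hΩm]
    filter_upwards [hupos, hvpos] with x hux hvx hxΩ
    have hu' := hux hxΩ
    have hv' := hvx hxΩ
    rcases le_or_gt (u x) (v x) with h | h
    · have : w x = 0 := by simp [hw, max_eq_right (by linarith : u x - v x ≤ 0)]
      simp [this]
    · have hwx : 0 ≤ w x := by simp [hw]
      have hvp : (0:ℝ) < v x ^ γ := Real.rpow_pos_of_pos hv' γ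
      have hup : (0:ℝ) < u x ^ γ := Real.rpow_pos_of_pos hu' γ
      have hle : v x ^ γ ≤ u x ^ γ := Real.rpow_le_rpow hv'.le h.le hγ.le
      have : 1 / u x ^ γ ≤ 1 / v x ^ γ := by
        apply one_div_le_one_div_of_le hvp hle
      exact mul_nonneg hwx (by linarith)
  -- Step 3: the LHS integral is zero.
  have hgint : IntegrableOn (fun x => w x * (1 / v x ^ γ - 1 / u x ^ γ)) Ω volume := by
    have heq : (fun x => w x * (1 / v x ^ γ - 1 / u x ^ γ)) =
        fun x => w x / v x ^ γ - w x / u x ^ γ := by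
      funext x; ring
    rw [heq]; exact hwv.sub hwu
  have hI0 : (∫ x in Ω, w x * (1 / v x ^ γ - 1 / u x ^ γ) ∂volume) = 0 := by
    have h1 : (∫ x in Ω, w x * (1 / v x ^ γ - 1 / u x ^ γ) ∂volume) ≤ 0 := by
      nlinarith [hineq.trans hRHS]
    have h2 : 0 ≤ (∫ x in Ω, w x * (1 / v x ^ γ - 1 / u x ^ γ) ∂volume) :=
      integral_nonneg_of_ae hg_nonneg
    linarith
  have hg0 : ∀ᵐ x ∂volume.restrict Ω, w x * (1 / v x ^ γ - 1 / u x ^ γ) = 0 := by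
    have := (integral_eq_zero_iff_of_nonneg_ae hg_nonneg hgint).mp hI0
    filter_upwards [this] with x hx using hx
  rw [ae_restrict_iff' hΩm] at hg0
  -- Step 4: combine.
  filter_upwards [hu0, hv0, hupos, hvpos, hg0] with x h1 h2 h3 h4 h5
  by_cases hxΩ : x ∈ Ω
  · by_contra hlt
    push_neg at hlt
    have hu' := h3 hxΩ
    have hv' := h4 hxΩ
    have hwx : w x = u x - v x := by simp [hw, max_eq_left (by linarith : (0:ℝ) ≤ u x - v x)]
    have hvp : (0:ℝ) < v x ^ γ := Real.rpow_pos_of_pos hv' γ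
    have hup : (0:ℝ) < u x ^ γ := Real.rpow_pos_of_pos hu' γ
    have hltγ : v x ^ γ < u x ^ γ := Real.rpow_lt_rpow hv'.le hlt hγ
    have hfac : 0 < 1 / v x ^ γ - 1 / u x ^ γ := by
      have : 1 / u x ^ γ < 1 / v x ^ γ := one_div_lt_one_div_of_lt hvp hltγ
      linarith
    have := h5 hxΩ
    rw [hwx] at this
    nlinarith
  · rw [h1 hxΩ, h2 hxΩ]
end
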